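/- For every q ∈ (0,1] there exists a constant C_q > 0 such that for all continuously differentiable u, v : ℝ → ℂ with u, u', v, v' square-integrable, ‖ |v|^q v − |u|^q u ‖² ≤ C_q ‖u − v‖² ( 1 + ‖u‖_{H¹}² + ‖v‖_{H¹}² ), where the left-hand side is the squared L²-norm of x ↦ |v(x)|^q v(x) − |u(x)|^q u(x). -/

import Mathlib

open MeasureTheory
open scoped ENNReal

/-- The `L²(ℝ;ℂ)` norm of a function, `‖f‖ = (∫ ‖f(x)‖² dx)^{1/2}`. -/
noncomputable def L2norm (f : ℝ → ℂ) : ℝ := Real.sqrt (∫ x, ‖f x‖ ^ 2)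

/-- The `H¹(ℝ;ℂ)` norm of a function, `‖f‖_{H¹} = (‖f‖² + ‖f'‖²)^{1/2}`. -/
noncomputable def H1norm (f : ℝ → ℂ) : ℝ :=
  Real.sqrt ((∫ x, ‖f x‖ ^ 2) + ∫ x, ‖deriv f x‖ ^ 2)

/- Auxiliary lemmas -/

lemma sq_integrable {f : ℝ → ℂ} (hf : MemLp f 2 volume) :
    Integrable (fun x => ‖f x‖ ^ 2) volume := by
  have h := hf.integrable_norm_rpow two_ne_zero ENNReal.ofNat_ne_top
  have h2 : (2 : ℝ≥0∞).toReal = (2 : ℝ) := by simp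
  refine h.congr (Filter.Eventually.of_forall fun x => ?_)
  show ‖f x‖ ^ (2 : ℝ≥0∞).toReal = ‖f x‖ ^ (2 : ℕ)
  rw [h2, show (2 : ℝ) = ((2 : ℕ) : ℝ) by norm_num, Real.rpow_natCast]

/-- 1D Sobolev / Agmon-type bound: `‖u x‖² ≤ ∫‖u‖² + ∫‖u'‖²`. -/
lemma sup_sq_le {u : ℝ → ℂ} (hu : ContDiff ℝ 1 u) (hu2 : MemLp u 2 volume)
    (hu2' : MemLp (deriv u) 2 volume) (x : ℝ) :
    ‖u x‖ ^ 2 ≤ (∫ t, ‖u t‖ ^ 2) + ∫ t, ‖deriv u t‖ ^ 2 := by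
  set g : ℝ → ℝ := fun t => ‖u t‖ ^ 2 with hg
  set φ : ℝ → ℝ := fun t => (inner ℝ (u t) (deriv u t) : ℝ) + (inner ℝ (deriv u t) (u t) : ℝ) with hφ
  set h : ℝ → ℝ := fun t => ‖u t‖ ^ 2 + ‖deriv u t‖ ^ 2 with hh
  have hgint : Integrable g volume := sq_integrable hu2
  have hg'int : Integrable (fun t => ‖deriv u t‖ ^ 2) volume := sq_integrable hu2'
  have hhint : Integrable h volume := hgint.add hg'int
  have hdiff : ∀ t, HasDerivAt u (deriv u t) t := fun t =>
    ((hu.differentiable one_ne_zero) t).hasDerivAt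
  have hgderiv : ∀ t, HasDerivAt g (φ t) t := by
    intro t
    have h1 := (hdiff t).inner ℝ (hdiff t)
    have h3 : (fun s => (inner ℝ (u s) (u s) : ℝ)) = g := by
      funext s; rw [hg, real_inner_self_eq_norm_sq]
    rw [h3] at h1
    exact h1
  have hφcont : Continuous φ :=
    (hu.continuous.inner (hu.continuous_deriv le_rfl)).add
      ((hu.continuous_deriv le_rfl).inner hu.continuous)
  have hφabs : ∀ t, |φ t| ≤ h t := by
    intro t
    have h1 : |(inner ℝ (deriv u t) (u t) : ℝ)| ≤ ‖deriv u t‖ * ‖u t‖ :=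
      abs_real_inner_le_norm _ _
    have h1' : |(inner ℝ (u t) (deriv u t) : ℝ)| ≤ ‖u t‖ * ‖deriv u t‖ :=
      abs_real_inner_le_norm _ _
    have h2 : 2 * ‖deriv u t‖ * ‖u t‖ ≤ ‖deriv u t‖ ^ 2 + ‖u t‖ ^ 2 :=
      two_mul_le_add_sq _ _
    have h3 : |φ t| ≤ |(inner ℝ (u t) (deriv u t) : ℝ)| + |(inner ℝ (deriv u t) (u t) : ℝ)| := by
      rw [hφ]; exact abs_add_le _ _
    have hcomm : ‖u t‖ * ‖deriv u t‖ = ‖deriv u t‖ * ‖u t‖ := mul_comm _ _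
    have hgoal : |φ t| ≤ ‖u t‖ ^ 2 + ‖deriv u t‖ ^ 2 := by linarith
    simpa [hh] using hgoal
  have hφint : Integrable φ volume := by
    refine hhint.mono' hφcont.aestronglyMeasurable ?_
    exact Filter.Eventually.of_forall fun t => by
      rw [Real.norm_eq_abs]; exact hφabs t
  -- FTC
  have hftc : ∀ y, g y = g x + ∫ t in x..y, φ t := by
    intro y
    have := intervalIntegral.integral_eq_sub_of_hasDerivAt
      (f := g) (f' := φ) (fun t _ => hgderiv t) (hφcont.intervalIntegrable x y)
    linarith [this]
  have htend1 : Filter.Tendsto (fun y => ∫ t in x..y, φ t) Filter.atTop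
      (nhds (∫ t in Set.Ioi x, φ t)) :=
    intervalIntegral_tendsto_integral_Ioi x hφint.integrableOn Filter.tendsto_id
  have htendg : Filter.Tendsto g Filter.atTop (nhds (g x + ∫ t in Set.Ioi x, φ t)) := by
    have := htend1.const_add (g x)
    refine this.congr fun y => (hftc y).symm
  set L : ℝ := g x + ∫ t in Set.Ioi x, φ t with hL
  have hLnonneg : 0 ≤ L :=
    ge_of_tendsto htendg (Filter.Eventually.of_forall fun y => sq_nonneg _)
  have hLzero : L = 0 := by
    by_contra hne
    have hLpos : 0 < L := lt_of_le_of_ne hLnonneg (Ne.symm hne)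
    have hev : ∀ᶠ y in Filter.atTop, L / 2 ≤ g y :=
      htendg.eventually (eventually_ge_nhds (half_lt_self hLpos))
    obtain ⟨A, hA⟩ := hev.exists_forall_of_atTop
    have hconst : IntegrableOn (fun _ : ℝ => L / 2) (Set.Ioi A) volume := by
      refine (hgint.integrableOn).mono' aestronglyMeasurable_const ?_
      rw [ae_restrict_iff' measurableSet_Ioi]
      refine Filter.Eventually.of_forall fun t ht => ?_
      rw [Real.norm_eq_abs, abs_of_nonneg (by linarith : (0:ℝ) ≤ L / 2)]
      exact hA t (le_of_lt ht)
    rw [integrableOn_const_iff] at hconst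
    rcases hconst with hc | hc
    · exact (ne_of_gt (by linarith : (0:ℝ) < L / 2)) (by simpa using hc)
    · simp [Real.volume_Ioi] at hc
  have hkey : g x = -∫ t in Set.Ioi x, φ t := by
    have : g x + ∫ t in Set.Ioi x, φ t = 0 := hLzero
    linarith
  have hstep1 : -(∫ t in Set.Ioi x, φ t) = ∫ t in Set.Ioi x, -φ t := by
    rw [integral_neg]
  have hstep2 : (∫ t in Set.Ioi x, -φ t) ≤ ∫ t in Set.Ioi x, h t := by
    refine integral_mono hφint.neg.integrableOn hhint.integrableOn fun t => ?_
    have := hφabs t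
    have := neg_abs_le (φ t)
    simp only [Pi.neg_apply]
    linarith
  have hstep3 : (∫ t in Set.Ioi x, h t) ≤ ∫ t, h t :=
    setIntegral_le_integral hhint
      (Filter.Eventually.of_forall fun t => add_nonneg (sq_nonneg _) (sq_nonneg _))
  have hfinal : (∫ t, h t) = (∫ t, ‖u t‖ ^ 2) + ∫ t, ‖deriv u t‖ ^ 2 :=
    integral_add hgint hg'int
  calc ‖u x‖ ^ 2 = -∫ t in Set.Ioi x, φ t := hkey
    _ = ∫ t in Set.Ioi x, -φ t := hstep1
    _ ≤ ∫ t in Set.Ioi x, h t := hstep2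
    _ ≤ ∫ t, h t := hstep3
    _ = _ := hfinal

lemma key_real {q s t : ℝ} (hq0 : 0 < q) (hq1 : q ≤ 1) (hs : 0 ≤ s) (hst : s ≤ t) :
    (t ^ q - s ^ q) * s ≤ t ^ q * (t - s) := by
  have ht : 0 ≤ t := le_trans hs hst
  rcases eq_or_lt_of_le hs with hs0 | hs0
  · rw [← hs0]
    simp only [Real.zero_rpow (ne_of_gt hq0), mul_zero, sub_zero]
    positivity
  · -- 0 < s ≤ t
    have htpos : 0 < t := lt_of_lt_of_le hs0 hst
    have hx01 : s / t ≤ 1 := (div_le_one htpos).mpr hst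
    have hxpos : 0 < s / t := div_pos hs0 htpos
    -- (s/t) ≤ (s/t)^q
    have hxq : s / t ≤ (s / t) ^ q := by
      have := Real.rpow_le_rpow_of_exponent_ge hxpos hx01 hq1
      rwa [Real.rpow_one] at this
    -- t^q - s^q ≤ t^(q-1) (t - s)
    have hsq : s ^ q = t ^ q * (s / t) ^ q := by
      rw [← Real.mul_rpow (le_of_lt htpos) (le_of_lt hxpos)]
      rw [mul_div_cancel₀ s (ne_of_gt htpos)]
    have h1 : t ^ q - s ^ q ≤ t ^ q * (1 - s / t) := by
      rw [hsq, mul_sub, mul_one]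
      have : t ^ q * (s / t) ≤ t ^ q * (s / t) ^ q :=
        mul_le_mul_of_nonneg_left hxq (Real.rpow_nonneg (le_of_lt htpos) q)
      linarith
    have h2 : t ^ q * (1 - s / t) * s ≤ t ^ q * (t - s) := by
      have heq : t ^ q * (1 - s / t) * t = t ^ q * (t - s) := by
        field_simp
      rw [← heq]
      refine mul_le_mul_of_nonneg_left hst ?_
      have : 0 ≤ 1 - s / t := by linarith
      positivity
    have h0 : 0 ≤ t ^ q - s ^ q := by
      have := Real.rpow_le_rpow hs hst (le_of_lt hq0)
      linarith
    calc (t ^ q - s ^ q) * s ≤ t ^ q * (1 - s / t) * s :=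
          mul_le_mul_of_nonneg_right h1 hs
      _ ≤ t ^ q * (t - s) := h2

lemma ptwise_asym {q : ℝ} (hq0 : 0 < q) (hq1 : q ≤ 1) (a b : ℂ) (hab : ‖a‖ ≤ ‖b‖) :
    ‖((‖b‖ ^ q : ℝ) : ℂ) * b - ((‖a‖ ^ q : ℝ) : ℂ) * a‖ ≤ 2 * ‖b‖ ^ q * ‖a - b‖ := by
  have hsplit : ((‖b‖ ^ q : ℝ) : ℂ) * b - ((‖a‖ ^ q : ℝ) : ℂ) * a
      = ((‖b‖ ^ q : ℝ) : ℂ) * (b - a) + (((‖b‖ ^ q - ‖a‖ ^ q : ℝ)) : ℂ) * a := by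
    push_cast
    ring
  have hbqnn : (0:ℝ) ≤ ‖b‖ ^ q := Real.rpow_nonneg (norm_nonneg b) q
  have hqdiff : (0:ℝ) ≤ ‖b‖ ^ q - ‖a‖ ^ q := by
    have := Real.rpow_le_rpow (norm_nonneg a) hab (le_of_lt hq0)
    linarith
  have h1 : ‖((‖b‖ ^ q : ℝ) : ℂ) * (b - a)‖ = ‖b‖ ^ q * ‖b - a‖ := by
    rw [norm_mul, Complex.norm_real, Real.norm_eq_abs, abs_of_nonneg hbqnn]
  have h2 : ‖(((‖b‖ ^ q - ‖a‖ ^ q : ℝ)) : ℂ) * a‖ = (‖b‖ ^ q - ‖a‖ ^ q) * ‖a‖ := by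
    rw [norm_mul, Complex.norm_real, Real.norm_eq_abs, abs_of_nonneg hqdiff]
  have h3 : (‖b‖ ^ q - ‖a‖ ^ q) * ‖a‖ ≤ ‖b‖ ^ q * (‖b‖ - ‖a‖) :=
    key_real hq0 hq1 (norm_nonneg a) hab
  have h4 : ‖b‖ - ‖a‖ ≤ ‖a - b‖ := by
    have := norm_sub_norm_le b a
    rwa [norm_sub_rev b a] at this
  have h5 : ‖b - a‖ = ‖a - b‖ := norm_sub_rev b a
  calc ‖((‖b‖ ^ q : ℝ) : ℂ) * b - ((‖a‖ ^ q : ℝ) : ℂ) * a‖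
      ≤ ‖((‖b‖ ^ q : ℝ) : ℂ) * (b - a)‖ + ‖(((‖b‖ ^ q - ‖a‖ ^ q : ℝ)) : ℂ) * a‖ := by
        rw [hsplit]; exact norm_add_le _ _
    _ = ‖b‖ ^ q * ‖a - b‖ + (‖b‖ ^ q - ‖a‖ ^ q) * ‖a‖ := by rw [h1, h2, h5]
    _ ≤ ‖b‖ ^ q * ‖a - b‖ + ‖b‖ ^ q * (‖b‖ - ‖a‖) := by linarith
    _ ≤ ‖b‖ ^ q * ‖a - b‖ + ‖b‖ ^ q * ‖a - b‖ :=
        add_le_add le_rfl (mul_le_mul_of_nonneg_left h4 hbqnn)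
    _ = 2 * ‖b‖ ^ q * ‖a - b‖ := by ring

lemma ptwise_sq {q : ℝ} (hq0 : 0 < q) (hq1 : q ≤ 1) (a b : ℂ) :
    ‖((‖b‖ ^ q : ℝ) : ℂ) * b - ((‖a‖ ^ q : ℝ) : ℂ) * a‖ ^ 2
      ≤ 4 * (1 + ‖a‖ ^ 2 + ‖b‖ ^ 2) * ‖a - b‖ ^ 2 := by
  set M : ℝ := max ‖a‖ ‖b‖ with hM
  have hMnn : 0 ≤ M := le_trans (norm_nonneg a) (le_max_left _ _)
  have hbound : ‖((‖b‖ ^ q : ℝ) : ℂ) * b - ((‖a‖ ^ q : ℝ) : ℂ) * a‖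
      ≤ 2 * M ^ q * ‖a - b‖ := by
    rcases le_total ‖a‖ ‖b‖ with hab | hab
    · have := ptwise_asym hq0 hq1 a b hab
      have hMb : M = ‖b‖ := max_eq_right hab
      rwa [hMb]
    · have := ptwise_asym hq0 hq1 b a hab
      have hMa : M = ‖a‖ := max_eq_left hab
      rw [hMa]
      calc ‖((‖b‖ ^ q : ℝ) : ℂ) * b - ((‖a‖ ^ q : ℝ) : ℂ) * a‖
          = ‖((‖a‖ ^ q : ℝ) : ℂ) * a - ((‖b‖ ^ q : ℝ) : ℂ) * b‖ := norm_sub_rev _ _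
        _ ≤ 2 * ‖a‖ ^ q * ‖b - a‖ := this
        _ = 2 * ‖a‖ ^ q * ‖a - b‖ := by rw [norm_sub_rev]
  have hMq : (M ^ q) ^ 2 ≤ 1 + ‖a‖ ^ 2 + ‖b‖ ^ 2 := by
    rcases le_total M 1 with hM1 | hM1
    · have h1 : M ^ q ≤ 1 := Real.rpow_le_one hMnn hM1 (le_of_lt hq0)
      have h2 : (M ^ q) ^ 2 ≤ 1 := by
        nlinarith [Real.rpow_nonneg hMnn q]
      nlinarith [sq_nonneg ‖a‖, sq_nonneg ‖b‖]
    · have h1 : M ^ q ≤ M := by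
        have := Real.rpow_le_rpow_of_exponent_le hM1 hq1
        rwa [Real.rpow_one] at this
      have h2 : (M ^ q) ^ 2 ≤ M ^ 2 := by
        nlinarith [Real.rpow_nonneg hMnn q]
      have h3 : M ^ 2 ≤ ‖a‖ ^ 2 + ‖b‖ ^ 2 := by
        rcases max_cases ‖a‖ ‖b‖ with ⟨hm, _⟩ | ⟨hm, _⟩ <;>
          rw [hM, hm] <;> nlinarith [sq_nonneg ‖a‖, sq_nonneg ‖b‖]
      linarith
  have hnn : 0 ≤ 2 * M ^ q * ‖a - b‖ := by positivity
  calc ‖((‖b‖ ^ q : ℝ) : ℂ) * b - ((‖a‖ ^ q : ℝ) : ℂ) * a‖ ^ 2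
      ≤ (2 * M ^ q * ‖a - b‖) ^ 2 := by
        have hn := norm_nonneg (((‖b‖ ^ q : ℝ) : ℂ) * b - ((‖a‖ ^ q : ℝ) : ℂ) * a)
        nlinarith
    _ = 4 * (M ^ q) ^ 2 * ‖a - b‖ ^ 2 := by ring
    _ ≤ 4 * (1 + ‖a‖ ^ 2 + ‖b‖ ^ 2) * ‖a - b‖ ^ 2 := by
        nlinarith [sq_nonneg ‖a - b‖, sq_nonneg (M ^ q)]

/-- For every `q ∈ (0,1]` there is `C_q > 0` such that for all `C¹`
functions `u, v : ℝ → ℂ` with `u, u', v, v'` square-integrable,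
`‖ |v|^q v − |u|^q u ‖² ≤ C_q ‖u − v‖² (1 + ‖u‖_{H¹}² + ‖v‖_{H¹}²)`. -/
theorem nonlinearity_L2sq_difference_estimate_small_q
    (q : ℝ) (hq0 : 0 < q) (hq1 : q ≤ 1) :
    ∃ C > (0 : ℝ), ∀ u v : ℝ → ℂ,
      ContDiff ℝ 1 u → MemLp u 2 volume → MemLp (deriv u) 2 volume →
      ContDiff ℝ 1 v → MemLp v 2 volume → MemLp (deriv v) 2 volume →
      (∫ x, ‖((‖v x‖ ^ q : ℝ) : ℂ) * v x - ((‖u x‖ ^ q : ℝ) : ℂ) * u x‖ ^ 2) ≤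
        C * L2norm (fun x => u x - v x) ^ 2 * (1 + H1norm u ^ 2 + H1norm v ^ 2) := by
  refine ⟨4, by norm_num, fun u v hu hu2 hu2' hv hv2 hv2' => ?_⟩
  have hIuv : Integrable (fun x => ‖u x - v x‖ ^ 2) volume := sq_integrable (hu2.sub hv2)
  have hH1u : H1norm u ^ 2 = (∫ x, ‖u x‖ ^ 2) + ∫ x, ‖deriv u x‖ ^ 2 := by
    rw [H1norm, Real.sq_sqrt]
    exact add_nonneg (integral_nonneg fun x => sq_nonneg _)
      (integral_nonneg fun x => sq_nonneg _)
  have hH1v : H1norm v ^ 2 = (∫ x, ‖v x‖ ^ 2) + ∫ x, ‖deriv v x‖ ^ 2 := by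
    rw [H1norm, Real.sq_sqrt]
    exact add_nonneg (integral_nonneg fun x => sq_nonneg _)
      (integral_nonneg fun x => sq_nonneg _)
  have hsupu : ∀ x, ‖u x‖ ^ 2 ≤ H1norm u ^ 2 := fun x => by
    rw [hH1u]; exact sup_sq_le hu hu2 hu2' x
  have hsupv : ∀ x, ‖v x‖ ^ 2 ≤ H1norm v ^ 2 := fun x => by
    rw [hH1v]; exact sup_sq_le hv hv2 hv2' x
  set K : ℝ := 1 + H1norm u ^ 2 + H1norm v ^ 2 with hK
  have hKnn : 0 ≤ K := by
    have := sq_nonneg (H1norm u); have := sq_nonneg (H1norm v); rw [hK]; linarith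
  have hptw : ∀ x, ‖((‖v x‖ ^ q : ℝ) : ℂ) * v x - ((‖u x‖ ^ q : ℝ) : ℂ) * u x‖ ^ 2
      ≤ 4 * K * ‖u x - v x‖ ^ 2 := by
    intro x
    refine le_trans (ptwise_sq hq0 hq1 (u x) (v x)) ?_
    have h1 : 1 + ‖u x‖ ^ 2 + ‖v x‖ ^ 2 ≤ K := by
      rw [hK]; linarith [hsupu x, hsupv x]
    nlinarith [sq_nonneg ‖u x - v x‖]
  have hmono : (∫ x, ‖((‖v x‖ ^ q : ℝ) : ℂ) * v x - ((‖u x‖ ^ q : ℝ) : ℂ) * u x‖ ^ 2)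
      ≤ ∫ x, 4 * K * ‖u x - v x‖ ^ 2 := by
    refine integral_mono_of_nonneg (Filter.Eventually.of_forall fun x => sq_nonneg _)
      (hIuv.const_mul (4 * K)) (Filter.Eventually.of_forall hptw)
  have hconst : (∫ x, 4 * K * ‖u x - v x‖ ^ 2) = 4 * K * ∫ x, ‖u x - v x‖ ^ 2 :=
    integral_const_mul _ _
  have hL2 : L2norm (fun x => u x - v x) ^ 2 = ∫ x, ‖u x - v x‖ ^ 2 := by
    rw [L2norm, Real.sq_sqrt (integral_nonneg fun x => sq_nonneg _)]
  calc (∫ x, ‖((‖v x‖ ^ q : ℝ) : ℂ) * v x - ((‖u x‖ ^ q : ℝ) : ℂ) * u x‖ ^ 2)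
      ≤ ∫ x, 4 * K * ‖u x - v x‖ ^ 2 := hmono
    _ = 4 * K * ∫ x, ‖u x - v x‖ ^ 2 := hconst
    _ = 4 * L2norm (fun x => u x - v x) ^ 2 * K := by rw [hL2]; ring
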